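/- For an odd prime ℓ and q = ℓ^{-1}, Euler's identity holds: Σ_{i=1}^∞ q^{i(i+1)/2} / ((1−q)(1−q²)⋯(1−q^i)) = ∏_{i=1}^∞ (1 + q^i) − 1. -/

import Mathlib

open Filter Finset

namespace EulerAux

/-- Partial q-Pochhammer denominator. -/
noncomputable def D (q : ℝ) (i : ℕ) : ℝ := ∏ j ∈ Finset.range i, (1 - q ^ (j + 1))

/-- Terms of Euler's series. -/
noncomputable def A (q : ℝ) (i : ℕ) : ℝ := q ^ (i * (i + 1) / 2) / D q i

lemma tri_succ (i : ℕ) : (i + 1) * (i + 2) / 2 = i * (i + 1) / 2 + (i + 1) := by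
  obtain ⟨k, hk⟩ := Nat.even_mul_succ_self i
  have h2 : (i + 1) * (i + 2) = i * (i + 1) + 2 * (i + 1) := by ring
  omega

lemma tri_ge (i : ℕ) : i ≤ i * (i + 1) / 2 := by
  rw [Nat.le_div_iff_mul_le (by norm_num)]
  rcases Nat.eq_zero_or_pos i with h | h
  · simp [h]
  · have h2 : 2 ≤ i + 1 := by omega
    exact Nat.mul_le_mul (Nat.le_refl i) h2

section q
variable {q : ℝ} (h0 : 0 < q) (h3 : q ≤ 1 / 3)

include h0 h3

lemma q_lt_one : q < 1 := by linarith

lemma pow_lt_one' (j : ℕ) : q ^ (j + 1) < 1 :=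
  pow_lt_one₀ h0.le (q_lt_one h0 h3) (Nat.succ_ne_zero j)

lemma D_pos (i : ℕ) : 0 < D q i := by
  refine Finset.prod_pos fun j _ => ?_
  have := pow_lt_one' h0 h3 j
  linarith

lemma D_half (i : ℕ) : 1 / 2 ≤ D q i := by
  have hq1 : q < 1 := q_lt_one h0 h3
  have hS : ∀ n : ℕ, ∑ j ∈ Finset.range n, q ^ (j + 1) ≤ 1 / 2 := by
    intro n
    have hgeom : ∑ j ∈ Finset.range n, q ^ j = (q ^ n - 1) / (q - 1) :=
      geom_sum_eq (by linarith) n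
    have h1 : ∑ j ∈ Finset.range n, q ^ (j + 1) = q * ∑ j ∈ Finset.range n, q ^ j := by
      rw [Finset.mul_sum]; exact Finset.sum_congr rfl fun j _ => by ring
    have hpn : 0 ≤ q ^ n := pow_nonneg h0.le n
    have hle : ∑ j ∈ Finset.range n, q ^ j ≤ 1 / (1 - q) := by
      rw [hgeom, show q ^ n - 1 = -(1 - q ^ n) by ring, show q - 1 = -(1 - q) by ring,
        neg_div_neg_eq]
      gcongr
      · linarith
    calc ∑ j ∈ Finset.range n, q ^ (j + 1) = q * ∑ j ∈ Finset.range n, q ^ j := h1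
      _ ≤ q * (1 / (1 - q)) := by
          apply mul_le_mul_of_nonneg_left hle h0.le
      _ ≤ 1 / 2 := by
          rw [mul_one_div, div_le_div_iff₀ (by linarith) (by norm_num)]
          linarith
  have key : ∀ i : ℕ, 1 - ∑ j ∈ Finset.range i, q ^ (j + 1) ≤ D q i := by
    intro i
    induction i with
    | zero => simp [D]
    | succ n ih =>
      have hpn : 0 ≤ q ^ (n + 1) := pow_nonneg h0.le _
      have hpn1 : q ^ (n + 1) ≤ 1 := (pow_lt_one' h0 h3 n).le
      have hSn : ∑ j ∈ Finset.range n, q ^ (j + 1) ≤ 1 / 2 := hS n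
      have hSnn : 0 ≤ ∑ j ∈ Finset.range n, q ^ (j + 1) :=
        Finset.sum_nonneg fun j _ => pow_nonneg h0.le _
      have hDsucc : D q (n + 1) = D q n * (1 - q ^ (n + 1)) := by
        rw [D, D, Finset.prod_range_succ]
      rw [hDsucc, Finset.sum_range_succ]
      nlinarith [mul_le_mul_of_nonneg_right ih (by linarith : (0:ℝ) ≤ 1 - q ^ (n + 1)),
        mul_nonneg hSnn hpn]
  calc (1 : ℝ) / 2 ≤ 1 - ∑ j ∈ Finset.range i, q ^ (j + 1) := by linarith [hS i]
    _ ≤ D q i := key i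

lemma A_pos (i : ℕ) : 0 < A q i :=
  div_pos (pow_pos h0 _) (D_pos h0 h3 i)

lemma A_le (i : ℕ) : A q i ≤ 2 * q ^ i := by
  have h1 : q ^ (i * (i + 1) / 2) ≤ q ^ i :=
    pow_le_pow_of_le_one h0.le (q_lt_one h0 h3).le (tri_ge i)
  have h2 := D_half h0 h3 i
  have h3' := D_pos h0 h3 i
  rw [A, div_le_iff₀ h3']
  nlinarith [pow_nonneg h0.le i]

lemma summable_A_mul (x : ℝ) (hx0 : 0 ≤ x) (hx1 : x ≤ 1) :
    Summable fun i => A q i * x ^ i := by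
  refine Summable.of_nonneg_of_le
    (fun i => mul_nonneg (A_pos h0 h3 i).le (pow_nonneg hx0 i))
    (fun i => ?_) ((summable_geometric_of_lt_one h0.le (q_lt_one h0 h3)).mul_left 2)
  calc A q i * x ^ i ≤ A q i * 1 := by
        apply mul_le_mul_of_nonneg_left (pow_le_one₀ hx0 hx1) (A_pos h0 h3 i).le
    _ = A q i := mul_one _
    _ ≤ 2 * q ^ i := A_le h0 h3 i

/-- The generating function. -/
noncomputable def F (q x : ℝ) : ℝ := ∑' i, A q i * x ^ i

lemma func_eq (x : ℝ) (hx0 : 0 ≤ x) (hx1 : x ≤ 1) :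
    F q x = (1 + q * x) * F q (q * x) := by
  have hqx0 : 0 ≤ q * x := mul_nonneg h0.le hx0
  have hqx1 : q * x ≤ 1 := by nlinarith [q_lt_one h0 h3]
  have hs1 : Summable fun i => A q i * x ^ i := summable_A_mul h0 h3 x hx0 hx1
  have hs2 : Summable fun i => A q i * (q * x) ^ i := summable_A_mul h0 h3 _ hqx0 hqx1
  have key : ∀ i : ℕ, A q (i + 1) * x ^ (i + 1) - A q (i + 1) * (q * x) ^ (i + 1)
      = q * x * (A q i * (q * x) ^ i) := by
    intro i
    have hD : D q (i + 1) = D q i * (1 - q ^ (i + 1)) := by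
      rw [D, D, Finset.prod_range_succ]
    have hTnat := tri_succ i
    have hT : q ^ ((i + 1) * (i + 2) / 2) = q ^ (i * (i + 1) / 2) * q ^ (i + 1) := by
      rw [hTnat, pow_add]
    have hDpos := D_pos h0 h3 i
    have hfac : (1 : ℝ) - q ^ (i + 1) ≠ 0 := by
      have := pow_lt_one' h0 h3 i; linarith
    rw [A, A, hD, hT]
    field_simp
    ring
  have hdiff : ∀ i : ℕ, A q i * x ^ i - A q i * (q * x) ^ i
      = (fun i => A q i * x ^ i - A q i * (q * x) ^ i) i := fun _ => rfl
  have hsub : F q x - F q (q * x)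
      = ∑' i, (A q i * x ^ i - A q i * (q * x) ^ i) := (Summable.tsum_sub hs1 hs2).symm
  have hssub : Summable fun i => A q i * x ^ i - A q i * (q * x) ^ i := hs1.sub hs2
  have hzero : (fun i => A q i * x ^ i - A q i * (q * x) ^ i) 0 = 0 := by simp
  have hshift : ∑' i, (A q i * x ^ i - A q i * (q * x) ^ i)
      = ∑' i, (A q (i + 1) * x ^ (i + 1) - A q (i + 1) * (q * x) ^ (i + 1)) := by
    rw [Summable.tsum_eq_zero_add hssub]
    simp
  have hrw : ∑' i, (A q (i + 1) * x ^ (i + 1) - A q (i + 1) * (q * x) ^ (i + 1))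
      = ∑' i, q * x * (A q i * (q * x) ^ i) := by
    exact tsum_congr key
  have : F q x - F q (q * x) = q * x * F q (q * x) := by
    rw [hsub, hshift, hrw, hs2.tsum_mul_left]
    rfl
  linarith [this]

lemma iterate_eq (n : ℕ) :
    F q 1 = (∏ j ∈ Finset.range n, (1 + q ^ (j + 1))) * F q (q ^ n) := by
  induction n with
  | zero => simp
  | succ n ih =>
    have hx0 : (0 : ℝ) ≤ q ^ n := pow_nonneg h0.le n
    have hx1 : q ^ n ≤ 1 := pow_le_one₀ h0.le (q_lt_one h0 h3).le
    have step := func_eq h0 h3 (q ^ n) hx0 hx1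
    rw [ih, step, Finset.prod_range_succ]
    have hqq : q * q ^ n = q ^ (n + 1) := by ring
    rw [hqq]
    ring

lemma F_zero_tendsto : Tendsto (fun n => F q (q ^ n)) atTop (nhds 1) := by
  have hq1 : q < 1 := q_lt_one h0 h3
  have hC : Summable fun i : ℕ => 2 * q ^ i :=
    (summable_geometric_of_lt_one h0.le hq1).mul_left 2
  set C : ℝ := ∑' i : ℕ, 2 * q ^ i with hCdef
  have hbound : ∀ n : ℕ, |F q (q ^ n) - 1| ≤ C * q ^ n := by
    intro n
    have hx0 : (0 : ℝ) ≤ q ^ n := pow_nonneg h0.le n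
    have hx1 : q ^ n ≤ 1 := pow_le_one₀ h0.le hq1.le
    have hs : Summable fun i => A q i * (q ^ n) ^ i := summable_A_mul h0 h3 _ hx0 hx1
    have h00 : A q 0 * (q ^ n) ^ 0 = 1 := by simp [A, D]
    have hF : F q (q ^ n) - 1 = ∑' i, A q (i + 1) * (q ^ n) ^ (i + 1) := by
      rw [F, Summable.tsum_eq_zero_add hs, h00]; ring
    have hs' : Summable fun i => A q (i + 1) * (q ^ n) ^ (i + 1) :=
      hs.comp_injective (add_left_injective 1)
    have hterm : ∀ i : ℕ, A q (i + 1) * (q ^ n) ^ (i + 1) ≤ 2 * q ^ i * q ^ n := by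
      intro i
      have h1 : A q (i + 1) ≤ 2 * q ^ (i + 1) := A_le h0 h3 (i + 1)
      have h2 : (q ^ n) ^ (i + 1) ≤ q ^ n := by
        calc (q ^ n) ^ (i + 1) = (q ^ n) ^ i * q ^ n := by ring
          _ ≤ 1 * q ^ n := by
              apply mul_le_mul_of_nonneg_right (pow_le_one₀ hx0 hx1) hx0
          _ = q ^ n := one_mul _
      have hA0 := (A_pos h0 h3 (i + 1)).le
      have := pow_nonneg h0.le (i + 1)
      calc A q (i + 1) * (q ^ n) ^ (i + 1) ≤ 2 * q ^ (i + 1) * (q ^ n) ^ (i + 1) := by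
            apply mul_le_mul_of_nonneg_right h1 (pow_nonneg hx0 _)
        _ ≤ 2 * q ^ (i + 1) * q ^ n := by
            apply mul_le_mul_of_nonneg_left h2 (by positivity)
        _ ≤ 2 * q ^ i * q ^ n := by
            have : q ^ (i + 1) ≤ q ^ i :=
              pow_le_pow_of_le_one h0.le hq1.le (Nat.le_succ i)
            nlinarith [pow_nonneg h0.le n]
    have hsum_le : ∑' i, A q (i + 1) * (q ^ n) ^ (i + 1) ≤ ∑' i : ℕ, 2 * q ^ i * q ^ n := by
      apply Summable.tsum_le_tsum hterm hs'
      exact hC.mul_right _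
    have hCq : ∑' i : ℕ, 2 * q ^ i * q ^ n = C * q ^ n := by
      rw [hCdef, ← tsum_mul_right]
    have hnonneg : 0 ≤ F q (q ^ n) - 1 := by
      rw [hF]
      exact tsum_nonneg fun i => mul_nonneg (A_pos h0 h3 _).le (pow_nonneg hx0 _)
    rw [abs_of_nonneg hnonneg, hF]
    calc ∑' i, A q (i + 1) * (q ^ n) ^ (i + 1) ≤ ∑' i : ℕ, 2 * q ^ i * q ^ n := hsum_le
      _ = C * q ^ n := hCq
  have htend : Tendsto (fun n : ℕ => C * q ^ n) atTop (nhds 0) := by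
    have := tendsto_pow_atTop_nhds_zero_of_lt_one h0.le hq1
    simpa using this.const_mul C
  have : Tendsto (fun n => |F q (q ^ n) - 1|) atTop (nhds 0) :=
    squeeze_zero (fun n => abs_nonneg _) hbound htend
  have h2 : Tendsto (fun n => F q (q ^ n) - 1) atTop (nhds 0) := by
    rwa [tendsto_zero_iff_abs_tendsto_zero]
  have := h2.add_const 1
  simpa using this

lemma multipliable_prod : Multipliable fun i : ℕ => 1 + q ^ (i + 1) := by
  have hq1 : q < 1 := q_lt_one h0 h3
  have hsum : Summable fun i : ℕ => q ^ (i + 1) :=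
    (summable_geometric_of_lt_one h0.le hq1).comp_injective (add_left_injective 1)
  set Cs : ℝ := ∑' i : ℕ, q ^ (i + 1) with hCs
  have hone : ∀ i : ℕ, (1 : ℝ) ≤ 1 + q ^ (i + 1) := fun i => by
    have := pow_nonneg h0.le (i + 1); linarith
  have hmono : Monotone fun s : Finset ℕ => ∏ i ∈ s, (1 + q ^ (i + 1)) := by
    intro s t hst
    have := Finset.prod_sdiff (f := fun i => 1 + q ^ (i + 1)) hst
    have hpos : (0:ℝ) < ∏ i ∈ s, (1 + q ^ (i + 1)) :=
      Finset.prod_pos fun i _ => by have := pow_nonneg h0.le (i + 1); linarith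
    have h1 : (1:ℝ) ≤ ∏ i ∈ t \ s, (1 + q ^ (i + 1)) := by
      calc (1:ℝ) = ∏ i ∈ t \ s, (1:ℝ) := by simp
        _ ≤ ∏ i ∈ t \ s, (1 + q ^ (i + 1)) :=
            Finset.prod_le_prod (fun i _ => zero_le_one) (fun i _ => hone i)
    calc ∏ i ∈ s, (1 + q ^ (i + 1)) = 1 * ∏ i ∈ s, (1 + q ^ (i + 1)) := (one_mul _).symm
      _ ≤ (∏ i ∈ t \ s, (1 + q ^ (i + 1))) * ∏ i ∈ s, (1 + q ^ (i + 1)) :=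
          mul_le_mul_of_nonneg_right h1 hpos.le
      _ = ∏ i ∈ t, (1 + q ^ (i + 1)) := this
  have hbdd : BddAbove (Set.range fun s : Finset ℕ => ∏ i ∈ s, (1 + q ^ (i + 1))) := by
    refine ⟨Real.exp Cs, ?_⟩
    rintro x ⟨s, rfl⟩
    calc ∏ i ∈ s, (1 + q ^ (i + 1)) ≤ ∏ i ∈ s, Real.exp (q ^ (i + 1)) := by
          apply Finset.prod_le_prod (fun i _ => by have := pow_nonneg h0.le (i+1); linarith)
          intro i _
          have := Real.add_one_le_exp (q ^ (i + 1))
          linarith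
      _ = Real.exp (∑ i ∈ s, q ^ (i + 1)) := (Real.exp_sum s _).symm
      _ ≤ Real.exp Cs := by
          apply Real.exp_le_exp.mpr
          exact Summable.sum_le_tsum s (fun i _ => pow_nonneg h0.le _) hsum
  exact ⟨_, tendsto_atTop_ciSup hmono hbdd⟩

lemma main_eq : ∑' i : ℕ, A q (i + 1) = (∏' i : ℕ, (1 + q ^ (i + 1))) - 1 := by
  have hm := multipliable_prod h0 h3
  have hprod : Tendsto (fun n => ∏ j ∈ Finset.range n, (1 + q ^ (j + 1))) atTop
      (nhds (∏' i : ℕ, (1 + q ^ (i + 1)))) := hm.hasProd.tendsto_prod_nat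
  have hmul : Tendsto (fun n => (∏ j ∈ Finset.range n, (1 + q ^ (j + 1))) * F q (q ^ n))
      atTop (nhds ((∏' i : ℕ, (1 + q ^ (i + 1))) * 1)) :=
    hprod.mul (F_zero_tendsto h0 h3)
  have hconst : Tendsto (fun _ : ℕ => F q 1) atTop (nhds (F q 1)) := tendsto_const_nhds
  have heq : (fun n : ℕ => F q 1)
      = fun n => (∏ j ∈ Finset.range n, (1 + q ^ (j + 1))) * F q (q ^ n) :=
    funext fun n => iterate_eq h0 h3 n
  rw [heq] at hconst
  have hF1 : F q 1 = (∏' i : ℕ, (1 + q ^ (i + 1))) * 1 := tendsto_nhds_unique hconst hmul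
  have hs : Summable fun i => A q i * (1:ℝ) ^ i := summable_A_mul h0 h3 1 zero_le_one le_rfl
  have hs' : Summable (A q) := by simpa using hs
  have hF1' : F q 1 = ∑' i, A q i := by
    rw [F]; exact tsum_congr fun i => by simp
  have h00 : A q 0 = 1 := by simp [A, D]
  have hsplit : ∑' i, A q i = 1 + ∑' i, A q (i + 1) := by
    rw [Summable.tsum_eq_zero_add hs', h00]
  have h := hF1
  rw [hF1', hsplit, mul_one] at h
  linarith

end q
end EulerAux

/-- Euler's identity for `q = ℓ^{-1}` with `ℓ` an odd prime:
`Σ_{i=1}^∞ q^{i(i+1)/2} / ((1−q)⋯(1−q^i)) = ∏_{i=1}^∞ (1 + q^i) − 1`. -/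
theorem euler_identity (ℓ : ℕ) (hℓ : ℓ.Prime) (hodd : Odd ℓ) :
    ∑' i : ℕ,
      ((ℓ : ℝ))⁻¹ ^ ((i + 1) * (i + 2) / 2) /
        ∏ j ∈ Finset.range (i + 1), (1 - ((ℓ : ℝ))⁻¹ ^ (j + 1))
    = (∏' i : ℕ, (1 + ((ℓ : ℝ))⁻¹ ^ (i + 1))) - 1 := by
  have hl3 : 3 ≤ ℓ := by
    have h2 := hℓ.two_le
    have hmod := Nat.odd_iff.mp hodd
    omega
  have hl0 : (0 : ℝ) < (ℓ : ℝ) := by exact_mod_cast Nat.pos_of_ne_zero (by omega)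
  have h0 : (0 : ℝ) < (ℓ : ℝ)⁻¹ := inv_pos.mpr hl0
  have h3 : ((ℓ : ℝ))⁻¹ ≤ 1 / 3 := by
    rw [one_div]
    apply inv_anti₀ (by norm_num)
    exact_mod_cast hl3
  have key := EulerAux.main_eq h0 h3
  have hterm : ∀ i : ℕ,
      ((ℓ : ℝ))⁻¹ ^ ((i + 1) * (i + 2) / 2) /
          ∏ j ∈ Finset.range (i + 1), (1 - ((ℓ : ℝ))⁻¹ ^ (j + 1))
        = EulerAux.A ((ℓ : ℝ))⁻¹ (i + 1) := by
    intro i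
    rw [EulerAux.A, EulerAux.D]
  rw [tsum_congr hterm]
  exact key
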